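/- Let b_1,…,b_N ∈ ℤ² be nonzero vectors spanning ℝ² with b_1+…+b_N = 0. Then for any two 2-dimensional cones C and C' of the secondary fan, Σ_{{i,j} ∈ L_C} |det(b_i,b_j)| = Σ_{{i,j} ∈ L_{C'}} |det(b_i,b_j)|. -/

import Mathlib

noncomputable section
open scoped Classical

/-- `det(u,v) = u₁v₂ - v₁u₂` for `u, v ∈ ℝ²`. -/
def det2 (u v : ℝ × ℝ) : ℝ := u.1 * v.2 - v.1 * u.2

/-- The canonical embedding `ℤ² → ℝ²`. -/
def toR2 (v : ℤ × ℤ) : ℝ × ℝ := ((v.1 : ℝ), (v.2 : ℝ))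

/-- The ray `ℝ_{≥0}·v`. -/
def rayThru (v : ℝ × ℝ) : Set (ℝ × ℝ) := {x | ∃ t : ℝ, 0 ≤ t ∧ x = t • v}

/-- `C` is a 2-dimensional cone of the secondary fan of `b`. -/
def IsSecCone {N : ℕ} (b : Fin N → ℝ × ℝ) (C : Set (ℝ × ℝ)) : Prop :=
  ∃ x ∈ (⋃ i, rayThru (b i))ᶜ,
    C = closure (connectedComponentIn ((⋃ i, rayThru (b i))ᶜ) x)

/-- The cone `ℝ_{≥0}·u + ℝ_{≥0}·v`. -/
def posCone (u v : ℝ × ℝ) : Set (ℝ × ℝ) :=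
  {x | ∃ s t : ℝ, 0 ≤ s ∧ 0 ≤ t ∧ x = s • u + t • v}

/-- `Σ_{{i,j} ∈ L_C} |det(b i, b j)|`. -/
noncomputable def LCsum {N : ℕ} (b : Fin N → ℝ × ℝ) (C : Set (ℝ × ℝ)) : ℝ :=
  ∑ i, ∑ j, if i < j ∧ C ⊆ posCone (b i) (b j) then |det2 (b i) (b j)| else 0

/-! ### Auxiliary definitions and lemmas -/

def sg (r : ℝ) : ℝ := if 0 < r then 1 else -1
def qp (A C : ℝ) : ℝ := if 0 < A ∧ 0 < C then 1 else 0
def qm (A C : ℝ) : ℝ := if A < 0 ∧ 0 < C then 1 else 0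
def qn (A C : ℝ) : ℝ := if A < 0 ∧ C < 0 then 1 else 0
def qo (A C : ℝ) : ℝ := if 0 < A ∧ C < 0 then 1 else 0

lemma det2_smul_right (u w : ℝ × ℝ) (t : ℝ) : det2 u (t • w) = t * det2 u w := by
  simp only [det2, Prod.smul_fst, Prod.smul_snd, smul_eq_mul]; ring

lemma det2_swap (u v : ℝ × ℝ) : det2 u v = -det2 v u := by simp only [det2]; ring

lemma det2_zero_left (u : ℝ × ℝ) : det2 0 u = 0 := by simp [det2]
lemma det2_zero_right (u : ℝ × ℝ) : det2 u 0 = 0 := by simp [det2]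

lemma det2_sum_right {ι : Type*} (s : Finset ι) (u : ℝ × ℝ) (f : ι → ℝ × ℝ) :
    det2 u (∑ j ∈ s, f j) = ∑ j ∈ s, det2 u (f j) := by
  simp only [det2, Prod.fst_sum, Prod.snd_sum, Finset.mul_sum, Finset.sum_mul]
  rw [← Finset.sum_sub_distrib]

lemma det2_sum_left {ι : Type*} (s : Finset ι) (u : ℝ × ℝ) (f : ι → ℝ × ℝ) :
    det2 (∑ j ∈ s, f j) u = ∑ j ∈ s, det2 (f j) u := by
  simp only [det2, Prod.fst_sum, Prod.snd_sum, Finset.mul_sum, Finset.sum_mul]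
  rw [← Finset.sum_sub_distrib]

lemma sg_mul_self (r : ℝ) : sg r * sg r = 1 := by
  unfold sg; split_ifs <;> norm_num

lemma sg_mul {l a : ℝ} (hl : l ≠ 0) (ha : a ≠ 0) : sg (l * a) = sg l * sg a := by
  rcases hl.lt_or_gt with h | h <;> rcases ha.lt_or_gt with h1 | h1 <;>
    unfold sg <;> split_ifs with u1 u2 u3 <;> try norm_num <;> nlinarith

lemma isClosed_rayThru {v : ℝ × ℝ} (hv : v ≠ 0) : IsClosed (rayThru v) := by
  have h : ¬(v.1 = 0 ∧ v.2 = 0) := fun h => hv (Prod.ext h.1 h.2)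
  have hvv : 0 < v.1 ^ 2 + v.2 ^ 2 := by
    rcases eq_or_ne v.1 0 with h1 | h1
    · have h2 : v.2 ≠ 0 := fun h2 => h ⟨h1, h2⟩
      nlinarith [sq_nonneg v.1, sq_pos_of_ne_zero h2]
    · nlinarith [sq_nonneg v.2, sq_pos_of_ne_zero h1]
  have hset : rayThru v = {x : ℝ × ℝ | det2 v x = 0 ∧ 0 ≤ v.1 * x.1 + v.2 * x.2} := by
    ext x
    constructor
    · rintro ⟨t, ht, rfl⟩
      constructor
      · simp only [det2, Prod.smul_fst, Prod.smul_snd, smul_eq_mul]; ring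
      · simp only [Prod.smul_fst, Prod.smul_snd, smul_eq_mul]; nlinarith
    · rintro ⟨h1, h2⟩
      refine ⟨(v.1 * x.1 + v.2 * x.2) / (v.1 ^ 2 + v.2 ^ 2), by positivity, ?_⟩
      have key : v.1 * x.2 - x.1 * v.2 = 0 := by
        simp only [det2] at h1; linarith
      apply Prod.ext <;> simp only [Prod.smul_fst, Prod.smul_snd, smul_eq_mul] <;> field_simp
      · linear_combination (-v.2) * key
      · linear_combination v.1 * key
  rw [hset]
  have c1 : Continuous fun x : ℝ × ℝ => det2 v x := by
    unfold det2; fun_prop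
  have c2 : Continuous fun x : ℝ × ℝ => v.1 * x.1 + v.2 * x.2 := by fun_prop
  exact IsClosed.inter (isClosed_eq c1 continuous_const) (isClosed_le continuous_const c2)

lemma det2_coords (u x v : ℝ × ℝ) (s t : ℝ) (h : x = s • u + t • v) :
    det2 x v = s * det2 u v ∧ det2 u x = t * det2 u v := by
  subst h
  constructor <;>
    simp only [det2, Prod.fst_add, Prod.snd_add, Prod.smul_fst, Prod.smul_snd, smul_eq_mul] <;>
    ring

lemma posCone_comm (u v : ℝ × ℝ) : posCone u v = posCone v u := by
  ext x
  constructor <;> rintro ⟨s, t, hs, ht, rfl⟩ <;> exact ⟨t, s, ht, hs, by rw [add_comm]⟩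

lemma posCone_self (u : ℝ × ℝ) : posCone u u ⊆ rayThru u := by
  rintro x ⟨s, t, hs, ht, rfl⟩
  exact ⟨s + t, by linarith, by rw [add_smul]⟩

lemma mem_posCone_iff {u v : ℝ × ℝ} (hD : det2 u v ≠ 0) (x : ℝ × ℝ) :
    x ∈ posCone u v ↔ 0 ≤ det2 x v * det2 u v ∧ 0 ≤ det2 u x * det2 u v := by
  constructor
  · rintro ⟨s, t, hs, ht, h⟩
    obtain ⟨h1, h2⟩ := det2_coords u x v s t h
    rw [h1, h2]
    constructor <;> nlinarith [sq_nonneg (det2 u v)]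
  · rintro ⟨h1, h2⟩
    refine ⟨det2 x v / det2 u v, det2 u x / det2 u v, ?_, ?_, ?_⟩
    · have : det2 x v / det2 u v = det2 x v * det2 u v / (det2 u v) ^ 2 := by
        field_simp
      rw [this]; positivity
    · have : det2 u x / det2 u v = det2 u x * det2 u v / (det2 u v) ^ 2 := by
        field_simp
      rw [this]; positivity
    · apply Prod.ext <;>
        simp only [det2, Prod.fst_add, Prod.snd_add, Prod.smul_fst, Prod.smul_snd,
          smul_eq_mul] <;>
        (have hD' : v.2 * u.1 - v.1 * u.2 ≠ 0 := by unfold det2 at hD; intro h; apply hD; linarith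
         field_simp; ring)

lemma isOpen_Omega {N : ℕ} (b : Fin N → ℝ × ℝ) (hb : ∀ i, b i ≠ 0) :
    IsOpen ((⋃ i, rayThru (b i))ᶜ) :=
  (isClosed_iUnion_of_finite fun i => isClosed_rayThru (hb i)).isOpen_compl
lemma subset_posCone_iff {N : ℕ} (b : Fin N → ℝ × ℝ) (hb : ∀ i, b i ≠ 0) (x x' : ℝ × ℝ)
    (hx : x ∈ (⋃ i, rayThru (b i))ᶜ)
    (hx' : x' ∈ connectedComponentIn ((⋃ i, rayThru (b i))ᶜ) x)
    (i j : Fin N) (hD : det2 (b i) (b j) ≠ 0)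
    (hi : det2 (b i) x' ≠ 0) (hj : det2 (b j) x' ≠ 0) :
    closure (connectedComponentIn ((⋃ i, rayThru (b i))ᶜ) x) ⊆ posCone (b i) (b j) ↔
      x' ∈ posCone (b i) (b j) := by
  set Ω := (⋃ i, rayThru (b i))ᶜ with hΩ
  set U := connectedComponentIn Ω x with hU
  set u := b i
  set v := b j
  set D := det2 u v with hDdef
  constructor
  · intro hsub
    exact hsub (subset_closure hx')
  · intro hmem
    -- open sets V and W
    set V : Set (ℝ × ℝ) := {z | 0 < det2 z v * D ∧ 0 < det2 u z * D} with hV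
    set W : Set (ℝ × ℝ) := {z | det2 z v * D < 0 ∨ det2 u z * D < 0} with hW
    have cp : Continuous fun z : ℝ × ℝ => det2 z v * D := by unfold det2; fun_prop
    have cq : Continuous fun z : ℝ × ℝ => det2 u z * D := by unfold det2; fun_prop
    have hVopen : IsOpen V := by
      rw [hV]
      exact (isOpen_lt continuous_const cp).inter (isOpen_lt continuous_const cq)
    have hWopen : IsOpen W := by
      rw [hW]
      exact (isOpen_lt cp continuous_const).union (isOpen_lt cq continuous_const)
    have hdisj : Disjoint V W := by
      rw [Set.disjoint_iff]
      rintro z ⟨⟨h1, h2⟩, h3 | h3⟩ <;> simp at * <;> linarith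
    have hUΩ : U ⊆ Ω := connectedComponentIn_subset Ω x
    have hUV : U ⊆ V ∪ W := by
      intro z hz
      have hzΩ : z ∈ Ω := hUΩ hz
      have hzi : z ∉ rayThru u := fun h => hzΩ (Set.mem_iUnion.mpr ⟨i, h⟩)
      have hzj : z ∉ rayThru v := fun h => hzΩ (Set.mem_iUnion.mpr ⟨j, h⟩)
      rcases lt_trichotomy (det2 z v * D) 0 with h1 | h1 | h1
      · exact Or.inr (Or.inl h1)
      · -- det2 z v = 0
        have hzv : det2 z v = 0 := by
          rcases mul_eq_zero.mp h1 with h | h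
          · exact h
          · exact absurd h hD
        rcases lt_trichotomy (det2 u z * D) 0 with h2 | h2 | h2
        · exact Or.inr (Or.inr h2)
        · -- z ∈ posCone with s = t = 0 → z = 0 → z ∈ rayThru, contradiction
          exfalso
          obtain ⟨s, t, hs, ht, hzeq⟩ := (mem_posCone_iff hD z).mpr ⟨le_of_eq h1.symm, le_of_eq h2.symm⟩
          obtain ⟨e1, e2⟩ := det2_coords u z v s t hzeq
          have hs0 : s = 0 := by
            rw [hzv] at e1
            rcases mul_eq_zero.mp e1.symm with h | h
            · exact h
            · exact absurd h hD
          exact hzj ⟨t, ht, by rw [hzeq, hs0, zero_smul, zero_add]⟩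
        · exfalso
          obtain ⟨s, t, hs, ht, hzeq⟩ := (mem_posCone_iff hD z).mpr ⟨le_of_eq h1.symm, le_of_lt h2⟩
          obtain ⟨e1, e2⟩ := det2_coords u z v s t hzeq
          have hs0 : s = 0 := by
            rw [hzv] at e1
            rcases mul_eq_zero.mp e1.symm with h | h
            · exact h
            · exact absurd h hD
          exact hzj ⟨t, ht, by rw [hzeq, hs0, zero_smul, zero_add]⟩
      · rcases lt_trichotomy (det2 u z * D) 0 with h2 | h2 | h2
        · exact Or.inr (Or.inr h2)
        · exfalso
          have hzu : det2 u z = 0 := by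
            rcases mul_eq_zero.mp h2 with h | h
            · exact h
            · exact absurd h hD
          obtain ⟨s, t, hs, ht, hzeq⟩ := (mem_posCone_iff hD z).mpr ⟨le_of_lt h1, le_of_eq h2.symm⟩
          obtain ⟨e1, e2⟩ := det2_coords u z v s t hzeq
          have ht0 : t = 0 := by
            rw [hzu] at e2
            rcases mul_eq_zero.mp e2.symm with h | h
            · exact h
            · exact absurd h hD
          exact hzi ⟨s, hs, by rw [hzeq, ht0, zero_smul, add_zero]⟩
        · exact Or.inl ⟨h1, h2⟩
    have hx'V : x' ∈ V := by
      obtain ⟨h1, h2⟩ := (mem_posCone_iff hD x').mp hmem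
      have hxv : det2 x' v ≠ 0 := by
        rw [det2_swap]
        simpa using hj
      constructor
      · rcases h1.lt_or_eq with h | h
        · exact h
        · exact absurd (mul_eq_zero.mp h.symm) (by push_neg; exact ⟨hxv, hD⟩)
      · rcases h2.lt_or_eq with h | h
        · exact h
        · exact absurd (mul_eq_zero.mp h.symm) (by push_neg; exact ⟨hi, hD⟩)
    have hpre : IsPreconnected U := isPreconnected_connectedComponentIn
    have hUsubV : U ⊆ V :=
      hpre.subset_left_of_subset_union hVopen hWopen hdisj hUV ⟨x', hx', hx'V⟩
    have hclosed : IsClosed {z : ℝ × ℝ | 0 ≤ det2 z v * D ∧ 0 ≤ det2 u z * D} :=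
      (isClosed_le continuous_const cp).inter (isClosed_le continuous_const cq)
    have : closure U ⊆ {z : ℝ × ℝ | 0 ≤ det2 z v * D ∧ 0 ≤ det2 u z * D} :=
      closure_minimal (fun z hz => ⟨(hUsubV hz).1.le, (hUsubV hz).2.le⟩) hclosed
    intro z hz
    exact (mem_posCone_iff hD z).mpr (this hz)

lemma det2_add_smul (u x z : ℝ × ℝ) (t : ℝ) :
    det2 u (x + t • z) = det2 u x + t * det2 u z := by
  simp only [det2, Prod.fst_add, Prod.snd_add, Prod.smul_fst, Prod.smul_snd, smul_eq_mul]
  ring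

lemma exists_generic {N : ℕ} (b : Fin N → ℝ × ℝ) (hb : ∀ i, b i ≠ 0) (x : ℝ × ℝ)
    (hx : x ∈ (⋃ i, rayThru (b i))ᶜ) :
    ∃ x' ∈ connectedComponentIn ((⋃ i, rayThru (b i))ᶜ) x, ∀ i, det2 (b i) x' ≠ 0 := by
  set Ω := (⋃ i, rayThru (b i))ᶜ with hΩ
  set U := connectedComponentIn Ω x with hUdef
  have hxU : x ∈ U := mem_connectedComponentIn hx
  by_cases hall : ∀ i, det2 (b i) x ≠ 0
  · exact ⟨x, hxU, hall⟩
  push_neg at hall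
  obtain ⟨i0, hi0⟩ := hall
  have hxne : x ≠ 0 := by
    rintro rfl
    exact hx (Set.mem_iUnion.mpr ⟨i0, 0, le_refl 0, by rw [zero_smul]⟩)
  set z : ℝ × ℝ := (-x.2, x.1) with hz
  have hxx : 0 < x.1 ^ 2 + x.2 ^ 2 := by
    have h : ¬(x.1 = 0 ∧ x.2 = 0) := fun h => hxne (Prod.ext h.1 h.2)
    rcases eq_or_ne x.1 0 with h1 | h1
    · have h2 : x.2 ≠ 0 := fun h2 => h ⟨h1, h2⟩
      nlinarith [sq_nonneg x.1, sq_pos_of_ne_zero h2]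
    · nlinarith [sq_nonneg x.2, sq_pos_of_ne_zero h1]
  have hkey : ∀ i, ¬(det2 (b i) x = 0 ∧ det2 (b i) z = 0) := by
    rintro i ⟨h1, h2⟩
    simp only [det2, hz] at h1 h2
    have e1 : (b i).1 * (x.1 ^ 2 + x.2 ^ 2) = 0 := by linear_combination x.1 * h2 + x.2 * h1
    have e2 : (b i).2 * (x.1 ^ 2 + x.2 ^ 2) = 0 := by linear_combination (-x.1) * h1 + x.2 * h2
    have hb1 : (b i).1 = 0 := by
      rcases mul_eq_zero.mp e1 with h | h
      · exact h
      · exact absurd h (by positivity)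
    have hb2 : (b i).2 = 0 := by
      rcases mul_eq_zero.mp e2 with h | h
      · exact h
      · exact absurd h (by positivity)
    exact hb i (Prod.ext hb1 hb2)
  -- bad parameter set
  set S : Set ℝ := ⋃ i, {t : ℝ | det2 (b i) (x + t • z) = 0} with hS
  have hSfin : S.Finite := by
    apply Set.finite_iUnion
    intro i
    apply Set.Subsingleton.finite
    intro t1 h1 t2 h2
    simp only [Set.mem_setOf_eq, det2_add_smul] at h1 h2
    rcases eq_or_ne (det2 (b i) z) 0 with hd | hd
    · exfalso
      exact hkey i ⟨by rw [hd] at h1; linarith, hd⟩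
    · have : (t1 - t2) * det2 (b i) z = 0 := by linarith
      rcases mul_eq_zero.mp this with h | h
      · linarith
      · exact absurd h hd
  have hUopen : IsOpen U := (isOpen_Omega b hb).connectedComponentIn
  obtain ⟨ε, hε, hball⟩ := Metric.isOpen_iff.mp hUopen x hxU
  set δ := ε / (‖z‖ + 1) with hδ
  have hδpos : 0 < δ := by positivity
  have hinf : (Set.Ioo (0:ℝ) δ).Infinite := Set.Ioo_infinite hδpos
  obtain ⟨t, ht⟩ := (hinf.diff hSfin).nonempty
  obtain ⟨⟨ht0, htδ⟩, htS⟩ := ht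
  refine ⟨x + t • z, hball ?_, ?_⟩
  · rw [Metric.mem_ball, dist_eq_norm, add_sub_cancel_left, norm_smul]
    have h1 : ‖t‖ = t := by rw [Real.norm_eq_abs, abs_of_pos ht0]
    rw [h1]
    calc t * ‖z‖ ≤ t * (‖z‖ + 1) := by nlinarith [norm_nonneg z]
      _ < δ * (‖z‖ + 1) := by nlinarith [norm_nonneg z]
      _ = ε := by
          have hne : ‖z‖ + 1 ≠ 0 := by positivity
          rw [hδ, div_mul_cancel₀ _ hne]
  · intro i
    intro h
    exact htS (Set.mem_iUnion.mpr ⟨i, h⟩)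

lemma qsum {A C : ℝ} (hA : A ≠ 0) (hC : C ≠ 0) : qp A C + qm A C + qn A C + qo A C = 1 := by
  rcases hA.lt_or_gt with h1 | h1 <;> rcases hC.lt_or_gt with h2 | h2 <;>
    simp [qp, qm, qn, qo, h1, h2, asymm h1, asymm h2]

lemma pair_id (A C A' C' : ℝ) (hA : A ≠ 0) (hC : C ≠ 0) (hA' : A' ≠ 0) (hC' : C' ≠ 0) :
    |A * C' - A' * C| * (sg A * sg A') - |A * C' - A' * C| * (sg C * sg C') =
      -2 * (A * C' - A' * C) *
        (qp A C * qm A' C' - qm A C * qp A' C' + qn A C * qo A' C' - qo A C * qn A' C'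
          + qp A C * qo A' C' - qo A C * qp A' C' - qm A C * qn A' C' + qn A C * qm A' C') := by
  rcases hA.lt_or_gt with h1 | h1 <;>
    rcases hC.lt_or_gt with h2 | h2 <;>
      rcases hA'.lt_or_gt with h3 | h3 <;>
        rcases hC'.lt_or_gt with h4 | h4 <;>
          simp only [sg, qp, qm, qn, qo, h1, h2, h3, h4, asymm h1, asymm h2, asymm h3, asymm h4,
            if_true, if_false, and_self, and_true, true_and, and_false, false_and, if_pos,
            if_neg, not_false_iff, ite_true, ite_false] <;>
            rcases le_or_gt 0 (A * C' - A' * C) with hd | hd <;>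
              first
                | (rw [abs_of_nonneg hd]; nlinarith)
                | (rw [abs_of_neg hd]; nlinarith)

lemma ALG {N : ℕ} (a c : Fin N → ℝ) (ha : ∀ i, a i ≠ 0) (hc : ∀ i, c i ≠ 0)
    (hsa : ∑ i, a i = 0) (hsc : ∑ i, c i = 0) :
    ∑ i, ∑ j, |a i * c j - a j * c i| * (sg (a i) * sg (a j)) =
      ∑ i, ∑ j, |a i * c j - a j * c i| * (sg (c i) * sg (c j)) := by
  set F1 : Fin N → ℝ := fun i => qp (a i) (c i) with hF1
  set F2 : Fin N → ℝ := fun i => qm (a i) (c i) with hF2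
  set F3 : Fin N → ℝ := fun i => qn (a i) (c i) with hF3
  set F4 : Fin N → ℝ := fun i => qo (a i) (c i) with hF4
  have hq : ∀ i, F1 i + F2 i + F3 i + F4 i = 1 := by
    intro i
    simp only [hF1, hF2, hF3, hF4]
    exact qsum (ha i) (hc i)
  have hSA : (∑ i, F1 i * a i) + (∑ i, F2 i * a i) + (∑ i, F3 i * a i) + (∑ i, F4 i * a i)
      = 0 := by
    rw [← Finset.sum_add_distrib, ← Finset.sum_add_distrib, ← Finset.sum_add_distrib, ← hsa]
    apply Finset.sum_congr rfl
    intro i _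
    linear_combination (a i) * hq i
  have hSC : (∑ i, F1 i * c i) + (∑ i, F2 i * c i) + (∑ i, F3 i * c i) + (∑ i, F4 i * c i)
      = 0 := by
    rw [← Finset.sum_add_distrib, ← Finset.sum_add_distrib, ← Finset.sum_add_distrib, ← hsc]
    apply Finset.sum_congr rfl
    intro i _
    linear_combination (c i) * hq i
  rw [← sub_eq_zero]
  simp only [← Finset.sum_sub_distrib]
  have hpt : ∀ i j, |a i * c j - a j * c i| * (sg (a i) * sg (a j)) -
      |a i * c j - a j * c i| * (sg (c i) * sg (c j)) =
      (-2) * ((F1 i * a i) * (F2 j * c j)) +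
          (2) * ((F1 i * c i) * (F2 j * a j)) +
          (2) * ((F2 i * a i) * (F1 j * c j)) +
          (-2) * ((F2 i * c i) * (F1 j * a j)) +
          (-2) * ((F3 i * a i) * (F4 j * c j)) +
          (2) * ((F3 i * c i) * (F4 j * a j)) +
          (2) * ((F4 i * a i) * (F3 j * c j)) +
          (-2) * ((F4 i * c i) * (F3 j * a j)) +
          (-2) * ((F1 i * a i) * (F4 j * c j)) +
          (2) * ((F1 i * c i) * (F4 j * a j)) +
          (2) * ((F4 i * a i) * (F1 j * c j)) +
          (-2) * ((F4 i * c i) * (F1 j * a j)) +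
          (2) * ((F2 i * a i) * (F3 j * c j)) +
          (-2) * ((F2 i * c i) * (F3 j * a j)) +
          (-2) * ((F3 i * a i) * (F2 j * c j)) +
          (2) * ((F3 i * c i) * (F2 j * a j)) := by
    intro i j
    rw [pair_id (a i) (c i) (a j) (c j) (ha i) (hc i) (ha j) (hc j)]
    simp only [hF1, hF2, hF3, hF4]
    ring
  calc (∑ i, ∑ j, (|a i * c j - a j * c i| * (sg (a i) * sg (a j)) -
      |a i * c j - a j * c i| * (sg (c i) * sg (c j))))
      = ∑ i, ∑ j, ((-2) * ((F1 i * a i) * (F2 j * c j)) +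
          (2) * ((F1 i * c i) * (F2 j * a j)) +
          (2) * ((F2 i * a i) * (F1 j * c j)) +
          (-2) * ((F2 i * c i) * (F1 j * a j)) +
          (-2) * ((F3 i * a i) * (F4 j * c j)) +
          (2) * ((F3 i * c i) * (F4 j * a j)) +
          (2) * ((F4 i * a i) * (F3 j * c j)) +
          (-2) * ((F4 i * c i) * (F3 j * a j)) +
          (-2) * ((F1 i * a i) * (F4 j * c j)) +
          (2) * ((F1 i * c i) * (F4 j * a j)) +
          (2) * ((F4 i * a i) * (F1 j * c j)) +
          (-2) * ((F4 i * c i) * (F1 j * a j)) +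
          (2) * ((F2 i * a i) * (F3 j * c j)) +
          (-2) * ((F2 i * c i) * (F3 j * a j)) +
          (-2) * ((F3 i * a i) * (F2 j * c j)) +
          (2) * ((F3 i * c i) * (F2 j * a j))) := by
        apply Finset.sum_congr rfl; intro i _; apply Finset.sum_congr rfl; intro j _
        exact hpt i j
    _ = 0 := by
        simp only [Finset.sum_add_distrib, ← Finset.mul_sum, ← Finset.sum_mul]
        linear_combination (4 * ((∑ i, F1 i * c i) + (∑ i, F3 i * c i))) * hSA +
          (-4 * ((∑ i, F1 i * a i) + (∑ i, F3 i * a i))) * hSC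

lemma g_eval {d ai aj : ℝ} (hd : d ≠ 0) (hai : ai ≠ 0) (haj : aj ≠ 0) :
    (if 0 ≤ -aj * d ∧ 0 ≤ ai * d then |d| else 0)
      = (|d| + d * sg ai - d * sg aj - |d| * (sg ai * sg aj)) / 4 := by
  rcases hd.lt_or_gt with h | h <;>
    rcases hai.lt_or_gt with h1 | h1 <;>
      rcases haj.lt_or_gt with h2 | h2 <;>
        simp only [sg, h1, h2, asymm h1, asymm h2, if_true, if_false, ite_true, ite_false] <;>
          split_ifs with hc <;>
            first
              | (obtain ⟨hc1, hc2⟩ := hc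
                 first
                   | (rw [abs_of_pos h]; nlinarith)
                   | (rw [abs_of_neg h]; nlinarith))
              | (rcases not_and_or.mp hc with h' | h' <;> push_neg at h' <;>
                  first
                    | (rw [abs_of_pos h]; nlinarith)
                    | (rw [abs_of_neg h]; nlinarith))

lemma Gval {N : ℕ} (b : Fin N → ℝ × ℝ) (hbsum : ∑ i, b i = 0) (x' : ℝ × ℝ)
    (ha : ∀ i, det2 (b i) x' ≠ 0) (hray : ∀ i, x' ∉ rayThru (b i)) :
    ∑ i, ∑ j, (if i < j ∧ x' ∈ posCone (b i) (b j) then |det2 (b i) (b j)| else 0)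
      = ((∑ i, ∑ j, |det2 (b i) (b j)|)
          - ∑ i, ∑ j, |det2 (b i) (b j)| * (sg (det2 (b i) x') * sg (det2 (b j) x'))) / 8 := by
  classical
  set g : Fin N → Fin N → ℝ :=
    fun i j => if x' ∈ posCone (b i) (b j) then |det2 (b i) (b j)| else 0 with hg
  have hsym : ∀ i j, g i j = g j i := by
    intro i j
    simp only [hg]
    rw [posCone_comm, det2_swap (b i) (b j), abs_neg]
  have hdiagzero : ∀ i, g i i = 0 := by
    intro i
    simp only [hg]
    rw [if_neg]
    intro hmem
    exact hray i (posCone_self (b i) hmem)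
  -- claim1 : g i j = E i j
  have claim1 : ∀ i j, g i j = (|det2 (b i) (b j)| + det2 (b i) (b j) * sg (det2 (b i) x')
      - det2 (b i) (b j) * sg (det2 (b j) x')
      - |det2 (b i) (b j)| * (sg (det2 (b i) x') * sg (det2 (b j) x'))) / 4 := by
    intro i j
    rcases eq_or_ne (det2 (b i) (b j)) 0 with hD | hD
    · simp only [hg, hD, abs_zero, ite_self, zero_mul, mul_zero]
      norm_num
    · simp only [hg]
      rw [if_congr ((mem_posCone_iff hD x').trans (by rw [det2_swap x' (b j)])) rfl rfl]
      exact g_eval hD (ha i) (ha j)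
  -- step A : LHS as ite (i < j) g
  have stepA : ∑ i, ∑ j, (if i < j ∧ x' ∈ posCone (b i) (b j) then |det2 (b i) (b j)| else 0)
      = ∑ i, ∑ j, (if i < j then g i j else 0) := by
    apply Finset.sum_congr rfl; intro i _; apply Finset.sum_congr rfl; intro j _
    simp only [hg]
    split_ifs with h1 h2 h3 <;> first | rfl | (exfalso; tauto)
  -- step B : double of it equals full sum
  have htri : ∀ i j : Fin N, g i j = (if i < j then g i j else 0) + (if j < i then g i j else 0)
      + (if i = j then g i j else 0) := by
    intro i j
    rcases lt_trichotomy i j with h | h | h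
    · rw [if_pos h, if_neg (asymm h), if_neg (ne_of_lt h)]; ring
    · rw [if_neg (by rw [h]; exact lt_irrefl j), if_neg (by rw [h]; exact lt_irrefl j), if_pos h]
      ring
    · rw [if_neg (asymm h), if_pos h, if_neg (ne_of_gt h)]; ring
  have hswap : ∑ i, ∑ j, (if j < i then g i j else 0) = ∑ i, ∑ j, (if i < j then g i j else 0) := by
    rw [Finset.sum_comm]
    apply Finset.sum_congr rfl; intro i _; apply Finset.sum_congr rfl; intro j _
    rw [hsym]
  have hdiag : ∑ i, ∑ j, (if i = j then g i j else 0) = 0 := by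
    have : ∀ i : Fin N, ∑ j, (if i = j then g i j else 0) = g i i := by
      intro i
      rw [Finset.sum_ite_eq]
      simp
    rw [Finset.sum_congr rfl fun i _ => this i]
    rw [Finset.sum_congr rfl fun i _ => hdiagzero i]
    simp
  have stepB : ∑ i, ∑ j, g i j = 2 * ∑ i, ∑ j, (if i < j then g i j else 0) := by
    calc ∑ i, ∑ j, g i j
        = ∑ i, ∑ j, ((if i < j then g i j else 0) + (if j < i then g i j else 0)
            + (if i = j then g i j else 0)) := by
          apply Finset.sum_congr rfl; intro i _; apply Finset.sum_congr rfl; intro j _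
          exact htri i j
      _ = (∑ i, ∑ j, (if i < j then g i j else 0)) + (∑ i, ∑ j, (if j < i then g i j else 0))
            + ∑ i, ∑ j, (if i = j then g i j else 0) := by
          simp only [Finset.sum_add_distrib]
      _ = 2 * ∑ i, ∑ j, (if i < j then g i j else 0) := by
          rw [hswap, hdiag]; ring
  -- step C : full sum equals (P - T)/4
  have hmid1 : ∑ i, (∑ j, det2 (b i) (b j)) * sg (det2 (b i) x') = 0 := by
    have hz : ∀ i : Fin N, (∑ j, det2 (b i) (b j)) = 0 := by
      intro i
      rw [← det2_sum_right, hbsum, det2_zero_right]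
    rw [Finset.sum_congr rfl fun i _ => by rw [hz i, zero_mul]]
    simp
  have hmid2 : ∑ i, ∑ j, det2 (b i) (b j) * sg (det2 (b j) x') = 0 := by
    rw [Finset.sum_comm]
    have : ∀ j : Fin N, ∑ i, det2 (b i) (b j) * sg (det2 (b j) x')
        = (∑ i, det2 (b i) (b j)) * sg (det2 (b j) x') := by
      intro j; rw [Finset.sum_mul]
    rw [Finset.sum_congr rfl fun j _ => this j]
    have hz : ∀ j : Fin N, (∑ i, det2 (b i) (b j)) = 0 := by
      intro j
      rw [← det2_sum_left, hbsum, det2_zero_left]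
    rw [Finset.sum_congr rfl fun j _ => by rw [hz j, zero_mul]]
    simp
  have stepC : ∑ i, ∑ j, g i j
      = ((∑ i, ∑ j, |det2 (b i) (b j)|)
          - ∑ i, ∑ j, |det2 (b i) (b j)| * (sg (det2 (b i) x') * sg (det2 (b j) x'))) / 4 := by
    calc ∑ i, ∑ j, g i j
        = ∑ i, ∑ j, ((|det2 (b i) (b j)| + det2 (b i) (b j) * sg (det2 (b i) x')
            - det2 (b i) (b j) * sg (det2 (b j) x')
            - |det2 (b i) (b j)| * (sg (det2 (b i) x') * sg (det2 (b j) x'))) / 4) := by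
          apply Finset.sum_congr rfl; intro i _; apply Finset.sum_congr rfl; intro j _
          exact claim1 i j
      _ = _ := by
          simp only [div_eq_mul_inv, sub_mul, add_mul, Finset.sum_sub_distrib,
            Finset.sum_add_distrib, ← Finset.sum_mul]
          rw [hmid1, hmid2]
          ring
  rw [stepA]
  have : ∑ i, ∑ j, (if i < j then g i j else 0) = (∑ i, ∑ j, g i j) / 2 := by
    rw [stepB]; ring
  rw [this, stepC]
  ring

lemma Teq {N : ℕ} (hN : 0 < N) (b : Fin N → ℝ × ℝ) (hbsum : ∑ i, b i = 0) (x' y' : ℝ × ℝ)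
    (hax : ∀ i, det2 (b i) x' ≠ 0) (hay : ∀ i, det2 (b i) y' ≠ 0) :
    ∑ i, ∑ j, |det2 (b i) (b j)| * (sg (det2 (b i) x') * sg (det2 (b j) x')) =
      ∑ i, ∑ j, |det2 (b i) (b j)| * (sg (det2 (b i) y') * sg (det2 (b j) y')) := by
  classical
  rcases eq_or_ne (det2 x' y') 0 with hD | hD
  · -- parallel case : y' = l • x'
    obtain ⟨i0⟩ : Nonempty (Fin N) := ⟨⟨0, hN⟩⟩
    have hx0 : x' ≠ 0 := by
      rintro rfl
      exact hax i0 (det2_zero_right (b i0))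
    have hpar : ∃ l : ℝ, y' = l • x' := by
      simp only [det2] at hD
      rcases eq_or_ne x'.1 0 with h1 | h1
      · have h2 : x'.2 ≠ 0 := by
          intro h2; exact hx0 (Prod.ext h1 h2)
        refine ⟨y'.2 / x'.2, Prod.ext ?_ ?_⟩ <;>
          simp only [Prod.smul_fst, Prod.smul_snd, smul_eq_mul] <;> field_simp
        · -- y'.1 = y'.2 / x'.2 * x'.1 ; with x'.1 = 0 and x'.1*y'.2 - y'.1*x'.2 = 0
          rw [h1] at hD ⊢
          have : y'.1 * x'.2 = 0 := by linarith
          rcases mul_eq_zero.mp this with h | h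
          · rw [h]; ring
          · exact absurd h h2
      · refine ⟨y'.1 / x'.1, Prod.ext ?_ ?_⟩ <;>
          simp only [Prod.smul_fst, Prod.smul_snd, smul_eq_mul] <;> field_simp <;>
          first | ring1 | linear_combination hD
    obtain ⟨l, rfl⟩ := hpar
    have hl : l ≠ 0 := by
      rintro rfl
      exact hay i0 (by rw [zero_smul, det2_zero_right])
    apply Finset.sum_congr rfl; intro i _; apply Finset.sum_congr rfl; intro j _
    rw [det2_smul_right, det2_smul_right, sg_mul hl (hax i), sg_mul hl (hax j)]
    linear_combination (-(|det2 (b i) (b j)| * (sg (det2 (b i) x') * sg (det2 (b j) x')))) *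
      sg_mul_self l
  · -- transversal case : use the Pluecker identity and ALG
    set a : Fin N → ℝ := fun i => det2 (b i) x' with hadef
    set c : Fin N → ℝ := fun i => det2 (b i) y' with hcdef
    have hPl : ∀ i j, det2 (b i) (b j) * det2 x' y' = a i * c j - a j * c i := by
      intro i j
      simp only [hadef, hcdef, det2]
      ring
    have habs : ∀ i j, |det2 (b i) (b j)| * |det2 x' y'| = |a i * c j - a j * c i| := by
      intro i j
      rw [← abs_mul, hPl i j]
    have hsa : ∑ i, a i = 0 := by
      simp only [hadef]
      rw [← det2_sum_left, hbsum, det2_zero_left]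
    have hsc : ∑ i, c i = 0 := by
      simp only [hcdef]
      rw [← det2_sum_left, hbsum, det2_zero_left]
    have key := ALG a c hax hay hsa hsc
    have hDabs : |det2 x' y'| ≠ 0 := abs_ne_zero.mpr hD
    apply mul_right_cancel₀ hDabs
    rw [Finset.sum_mul, Finset.sum_mul]
    calc ∑ i, (∑ j, |det2 (b i) (b j)| * (sg (a i) * sg (a j))) * |det2 x' y'|
        = ∑ i, ∑ j, |a i * c j - a j * c i| * (sg (a i) * sg (a j)) := by
          apply Finset.sum_congr rfl; intro i _
          rw [Finset.sum_mul]
          apply Finset.sum_congr rfl; intro j _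
          rw [← habs i j]; ring
      _ = ∑ i, ∑ j, |a i * c j - a j * c i| * (sg (c i) * sg (c j)) := key
      _ = ∑ i, (∑ j, |det2 (b i) (b j)| * (sg (c i) * sg (c j))) * |det2 x' y'| := by
          apply Finset.sum_congr rfl; intro i _
          rw [Finset.sum_mul]
          apply Finset.sum_congr rfl; intro j _
          rw [← habs i j]; ring

lemma LCsum_eq {N : ℕ} (b : Fin N → ℝ × ℝ) (hb : ∀ i, b i ≠ 0) (x x' : ℝ × ℝ)
    (hx : x ∈ (⋃ i, rayThru (b i))ᶜ)
    (hx'U : x' ∈ connectedComponentIn ((⋃ i, rayThru (b i))ᶜ) x)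
    (hdet : ∀ i, det2 (b i) x' ≠ 0) :
    LCsum b (closure (connectedComponentIn ((⋃ i, rayThru (b i))ᶜ) x))
      = ∑ i, ∑ j, (if i < j ∧ x' ∈ posCone (b i) (b j) then |det2 (b i) (b j)| else 0) := by
  unfold LCsum
  apply Finset.sum_congr rfl; intro i _; apply Finset.sum_congr rfl; intro j _
  rcases eq_or_ne (det2 (b i) (b j)) 0 with hD | hD
  · rw [hD, abs_zero, ite_self, ite_self]
  · rw [if_congr (and_congr_right fun _ =>
      subset_posCone_iff b hb x x' hx hx'U i j hD (hdet i) (hdet j)) rfl rfl]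

/-- the quantity `Σ_{{i,j} ∈ L_C} |det(b i, b j)|` is the same for
any two 2-dimensional cones `C`, `C'` of the secondary fan. -/
theorem stmt10 (N : ℕ) (b : Fin N → ℤ × ℤ)
    (hnz : ∀ i, b i ≠ 0)
    (hspan : Submodule.span ℝ (Set.range fun i => toR2 (b i)) = ⊤)
    (hsum : ∑ i, b i = 0)
    (C C' : Set (ℝ × ℝ))
    (hC : IsSecCone (fun i => toR2 (b i)) C)
    (hC' : IsSecCone (fun i => toR2 (b i)) C') :
    LCsum (fun i => toR2 (b i)) C = LCsum (fun i => toR2 (b i)) C' := by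
  classical
  rcases Nat.eq_zero_or_pos N with rfl | hN
  · unfold LCsum
    simp
  set B : Fin N → ℝ × ℝ := fun i => toR2 (b i) with hBdef
  have hBnz : ∀ i, B i ≠ 0 := by
    intro i h
    apply hnz i
    have h1 : ((b i).1 : ℝ) = 0 := congrArg Prod.fst h
    have h2 : ((b i).2 : ℝ) = 0 := congrArg Prod.snd h
    exact Prod.ext (by exact_mod_cast h1) (by exact_mod_cast h2)
  have hBsum : ∑ i, B i = 0 := by
    have h1 : (∑ i, (b i).1) = 0 := by
      have := congrArg Prod.fst hsum
      rw [Prod.fst_sum] at this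
      exact this
    have h2 : (∑ i, (b i).2) = 0 := by
      have := congrArg Prod.snd hsum
      rw [Prod.snd_sum] at this
      exact this
    apply Prod.ext
    · rw [Prod.fst_sum]
      simp only [hBdef, toR2]
      rw [Prod.fst_zero]
      exact_mod_cast congrArg (fun z : ℤ => (z : ℝ)) h1
    · rw [Prod.snd_sum]
      simp only [hBdef, toR2]
      rw [Prod.snd_zero]
      exact_mod_cast congrArg (fun z : ℤ => (z : ℝ)) h2
  obtain ⟨x, hx, hCeq⟩ := hC
  obtain ⟨y, hy, hC'eq⟩ := hC'
  subst hCeq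
  subst hC'eq
  obtain ⟨x', hx'U, hx'det⟩ := exists_generic B hBnz x hx
  obtain ⟨y', hy'U, hy'det⟩ := exists_generic B hBnz y hy
  have hx'ray : ∀ i, x' ∉ rayThru (B i) := fun i hmem =>
    (connectedComponentIn_subset _ _ hx'U) (Set.mem_iUnion.mpr ⟨i, hmem⟩)
  have hy'ray : ∀ i, y' ∉ rayThru (B i) := fun i hmem =>
    (connectedComponentIn_subset _ _ hy'U) (Set.mem_iUnion.mpr ⟨i, hmem⟩)
  rw [LCsum_eq B hBnz x x' hx hx'U hx'det, LCsum_eq B hBnz y y' hy hy'U hy'det]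
  rw [Gval B hBsum x' hx'det hx'ray, Gval B hBsum y' hy'det hy'ray]
  rw [Teq hN B hBsum x' y' hx'det hy'det]
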